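/- Let r be a positive integer, let a ∈ ℝ with 0 ≤ a < 1, let (A_n)_{n∈ℕ} be a sequence of matrices in ℝ^{r×r} with ℓ²-operator norm ‖A_n‖ ≤ a for all n, and let (β_n)_{n∈ℕ} be a sequence of positive integers. Then for every integer τ ≥ 1, ‖ Σ_{l=1}^{τ−1} Σ_{m=1}^{β_{l−1}} ( Π_{n=l}^{τ−1} A_n^{β_n} ) · A_{l−1}^{m} ‖ ≤ a² / (1 − a)². In particular, these sums are bounded uniformly in τ. -/

import Mathlib

set_option synthInstance.maxHeartbeats 1000000
set_option maxHeartbeats 1000000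

open Filter

private lemma geom_range_le (a : ℝ) (ha0 : 0 ≤ a) (ha1 : a < 1) (n : ℕ) :
    ∑ i ∈ Finset.range n, a ^ i ≤ 1 / (1 - a) := by
  have h1 : 0 < 1 - a := by linarith
  have h3 : a ^ n ≤ 1 := pow_le_one₀ ha0 ha1.le
  rw [geom_sum_eq ha1.ne n]
  have heq : (a ^ n - 1) / (a - 1) = (1 - a ^ n) / (1 - a) := by
    rw [div_eq_div_iff (by linarith) (by linarith)]; ring
  rw [heq, div_le_div_iff₀ h1 h1]
  nlinarith [pow_nonneg ha0 n]

private lemma geom_Icc_le (a : ℝ) (ha0 : 0 ≤ a) (ha1 : a < 1) (B : ℕ) :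
    ∑ m ∈ Finset.Icc 1 B, a ^ m ≤ a / (1 - a) := by
  have h1 : 0 < 1 - a := by linarith
  rw [show Finset.Icc 1 B = Finset.Ico 1 (B + 1) from (Finset.Ico_add_one_right_eq_Icc ..).symm,
    Finset.sum_Ico_eq_sum_range]
  simp only [Nat.add_sub_cancel, pow_add, pow_one]
  rw [← Finset.mul_sum]
  calc a * ∑ i ∈ Finset.range B, a ^ i ≤ a * (1 / (1 - a)) := by
        exact mul_le_mul_of_nonneg_left (geom_range_le a ha0 ha1 B) ha0
    _ = a / (1 - a) := by ring

theorem multi_batch_sum_bounded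
    (r : ℕ) (hr : 0 < r)
    (a : ℝ) (ha0 : 0 ≤ a) (ha1 : a < 1)
    (A : ℕ → (EuclideanSpace ℝ (Fin r) →L[ℝ] EuclideanSpace ℝ (Fin r)))
    (hA : ∀ n, ‖A n‖ ≤ a)
    (β : ℕ → ℕ) (hβ : ∀ n, 0 < β n) :
    ∀ τ : ℕ, 1 ≤ τ →
      ‖∑ l ∈ Finset.Icc 1 (τ - 1), ∑ m ∈ Finset.Icc 1 (β (l - 1)),
          (((List.range' l (τ - l)).reverse.map (fun n => A n ^ β n)).prod
            * A (l - 1) ^ m)‖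
        ≤ a ^ 2 / (1 - a) ^ 2 := by
  intro τ hτ
  haveI : Nonempty (Fin r) := ⟨⟨0, hr⟩⟩
  have h1 : 0 < 1 - a := by linarith
  -- bound on products of powers
  have hpow : ∀ n, ‖A n ^ β n‖ ≤ a := by
    intro n
    calc ‖A n ^ β n‖ ≤ ‖A n‖ ^ β n := norm_pow_le' _ (hβ n)
      _ ≤ a ^ β n := pow_le_pow_left₀ (norm_nonneg _) (hA n) _
      _ ≤ a ^ 1 := pow_le_pow_of_le_one ha0 ha1.le (hβ n)
      _ = a := pow_one a
  have hprod : ∀ L : List ℕ, ‖(L.map (fun n => A n ^ β n)).prod‖ ≤ a ^ L.length := by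
    intro L
    induction L with
    | nil =>
        simp only [List.map_nil, List.prod_nil, List.length_nil, pow_zero]
        exact le_of_eq norm_one
    | cons x xs ih =>
        simp only [List.map_cons, List.prod_cons, List.length_cons]
        calc ‖(A x ^ β x) * (xs.map (fun n => A n ^ β n)).prod‖
            ≤ ‖A x ^ β x‖ * ‖(xs.map (fun n => A n ^ β n)).prod‖ := norm_mul_le _ _
          _ ≤ a * a ^ xs.length := by
              apply mul_le_mul (hpow x) ih (norm_nonneg _) ha0
          _ = a ^ (xs.length + 1) := by ring
  -- per-term bound
  have hterm : ∀ l ∈ Finset.Icc 1 (τ - 1), ∀ m,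
      ‖((List.range' l (τ - l)).reverse.map (fun n => A n ^ β n)).prod * A (l - 1) ^ m‖
        ≤ a ^ (τ - l) * a ^ m := by
    intro l hl m
    calc ‖((List.range' l (τ - l)).reverse.map (fun n => A n ^ β n)).prod * A (l - 1) ^ m‖
        ≤ ‖((List.range' l (τ - l)).reverse.map (fun n => A n ^ β n)).prod‖ * ‖A (l - 1) ^ m‖ :=
          norm_mul_le _ _
      _ ≤ a ^ (τ - l) * a ^ m := by
          apply mul_le_mul
          · have := hprod (List.range' l (τ - l)).reverse
            simpa using this
          · calc ‖A (l - 1) ^ m‖ ≤ ‖A (l - 1)‖ ^ m := norm_pow_le _ _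
              _ ≤ a ^ m := pow_le_pow_left₀ (norm_nonneg _) (hA _) _
          · exact norm_nonneg _
          · exact pow_nonneg ha0 _
  -- outer geometric sum
  have houter : ∑ l ∈ Finset.Icc 1 (τ - 1), a ^ (τ - l) ≤ a / (1 - a) := by
    rw [show Finset.Icc 1 (τ - 1) = Finset.Ico 1 τ from by
        rw [← Finset.Ico_add_one_right_eq_Icc]; congr 1; omega,
      Finset.sum_Ico_eq_sum_range]
    have heq : ∀ i ∈ Finset.range (τ - 1), a ^ (τ - (1 + i)) = a ^ ((τ - 1) - 1 - i + 1) := by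
      intro i hi
      simp only [Finset.mem_range] at hi
      congr 1
      omega
    rw [Finset.sum_congr rfl heq]
    rw [Finset.sum_range_reflect (fun j => a ^ (j + 1)) (τ - 1)]
    have : ∀ j ∈ Finset.range (τ - 1), a ^ (j + 1) = a * a ^ j := by
      intro j _; ring
    rw [Finset.sum_congr rfl this, ← Finset.mul_sum]
    calc a * ∑ i ∈ Finset.range (τ - 1), a ^ i ≤ a * (1 / (1 - a)) :=
        mul_le_mul_of_nonneg_left (geom_range_le a ha0 ha1 _) ha0
      _ = a / (1 - a) := by ring
  calc ‖∑ l ∈ Finset.Icc 1 (τ - 1), ∑ m ∈ Finset.Icc 1 (β (l - 1)),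
          (((List.range' l (τ - l)).reverse.map (fun n => A n ^ β n)).prod
            * A (l - 1) ^ m)‖
      ≤ ∑ l ∈ Finset.Icc 1 (τ - 1), ∑ m ∈ Finset.Icc 1 (β (l - 1)), (a ^ (τ - l) * a ^ m) := by
        refine (norm_sum_le _ _).trans (Finset.sum_le_sum fun l hl => ?_)
        exact (norm_sum_le _ _).trans (Finset.sum_le_sum fun m _ => hterm l hl m)
    _ = ∑ l ∈ Finset.Icc 1 (τ - 1), a ^ (τ - l) * ∑ m ∈ Finset.Icc 1 (β (l - 1)), a ^ m := by
        refine Finset.sum_congr rfl fun l _ => ?_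
        rw [Finset.mul_sum]
    _ ≤ ∑ l ∈ Finset.Icc 1 (τ - 1), a ^ (τ - l) * (a / (1 - a)) := by
        refine Finset.sum_le_sum fun l _ => ?_
        exact mul_le_mul_of_nonneg_left (geom_Icc_le a ha0 ha1 _) (pow_nonneg ha0 _)
    _ = (∑ l ∈ Finset.Icc 1 (τ - 1), a ^ (τ - l)) * (a / (1 - a)) := by
        rw [← Finset.sum_mul]
    _ ≤ (a / (1 - a)) * (a / (1 - a)) := by
        apply mul_le_mul_of_nonneg_right houter (div_nonneg ha0 h1.le)
    _ = a ^ 2 / (1 - a) ^ 2 := by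
        field_simp
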